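/- arXiv:2005.09882 — 4 statements merged into one kernel-verified Lean document; each statement's English description precedes it below -/
import Mathlib

section
/- For fixed τ, σ̄, σ_r, σ_f, e⁰, γ₁, γ₂ with σ̄ > max(σ_r, σ_f), γ₁ ∈ (0,1), e⁰(1−γ₁) > γ₂ > 0, the function F(v) = vγ₂/(v²/τ − σ_r) + v(e⁰(1−γ₁) − γ₂)/(v²/τ − σ̄) + ve⁰γ₁/(v²/τ − σ_f) is strictly decreasing on (sqrt(σ̄τ), ∞) and tends to +∞ as v → sqrt(σ̄τ)⁺ and to 0 as v → ∞; hence for each d > 0 there is a unique v̄ > sqrt(σ̄τ) with F(v̄) = d. -/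
open Filter Set in
/-- The three-phase distance function
`F(v) = vγ₂/(v²/τ − σ_r) + v(e⁰(1−γ₁) − γ₂)/(v²/τ − σ̄) + ve⁰γ₁/(v²/τ − σ_f)`
is strictly decreasing on `(√(σ̄τ), ∞)`, tends to `+∞` at `√(σ̄τ)⁺` and to `0`
at `∞`; hence for each `d > 0` there is a unique `v̄ > √(σ̄τ)` with `F(v̄) = d`. -/
theorem distance_function_wellposed (τ σbar σr σf e0 γ1 γ2 : ℝ)
    (hτ : 0 < τ) (hσr : 0 ≤ σr) (hσf : 0 ≤ σf)
    (hσ1 : σr < σbar) (hσ2 : σf < σbar)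
    (hγ1 : 0 < γ1) (hγ1' : γ1 < 1) (hγ2 : 0 < γ2) (he : γ2 < e0 * (1 - γ1))
    (F : ℝ → ℝ)
    (hF : ∀ v : ℝ, F v = v * γ2 / (v ^ 2 / τ - σr)
      + v * (e0 * (1 - γ1) - γ2) / (v ^ 2 / τ - σbar)
      + v * e0 * γ1 / (v ^ 2 / τ - σf)) :
    StrictAntiOn F (Ioi (Real.sqrt (σbar * τ))) ∧
    Tendsto F (nhdsWithin (Real.sqrt (σbar * τ)) (Ioi (Real.sqrt (σbar * τ)))) atTop ∧
    Tendsto F atTop (nhds 0) ∧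
    ∀ d : ℝ, 0 < d → ∃! v : ℝ, Real.sqrt (σbar * τ) < v ∧ F v = d := by
  have hFe : F = fun v => v * γ2 / (v ^ 2 / τ - σr)
      + v * (e0 * (1 - γ1) - γ2) / (v ^ 2 / τ - σbar)
      + v * e0 * γ1 / (v ^ 2 / τ - σf) := funext hF
  set s := Real.sqrt (σbar * τ) with hsdef
  have hσbar : 0 < σbar := lt_of_le_of_lt hσr hσ1
  have hst : 0 < σbar * τ := mul_pos hσbar hτ
  have hs0 : 0 < s := Real.sqrt_pos.mpr hst
  have hs2 : s ^ 2 = σbar * τ := Real.sq_sqrt hst.le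
  have he0 : 0 < e0 := by nlinarith
  have hK2 : 0 < e0 * (1 - γ1) - γ2 := sub_pos.mpr he
  have hK3 : 0 < e0 * γ1 := mul_pos he0 hγ1
  -- denominators positive on Ioi s
  have hden : ∀ c : ℝ, c ≤ σbar → ∀ v ∈ Ioi s, 0 < v ^ 2 / τ - c := by
    intro c hcσ v hv
    have hv0 : 0 < v := hs0.trans hv
    have h2 : s ^ 2 < v ^ 2 := by
      have := pow_lt_pow_left₀ (show s < v from hv) hs0.le (by norm_num : 2 ≠ 0)
      exact this
    have : σbar < v ^ 2 / τ := by
      rw [lt_div_iff₀ hτ]; nlinarith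
    linarith
  -- strict antitonicity of each term
  have term_lt : ∀ (γ c : ℝ), 0 < γ → 0 ≤ c → c ≤ σbar →
      ∀ a ∈ Ioi s, ∀ b ∈ Ioi s, a < b →
      b * γ / (b ^ 2 / τ - c) < a * γ / (a ^ 2 / τ - c) := by
    intro γ c hγ hc hcσ a ha b hb hab
    have hda := hden c hcσ a ha
    have hdb := hden c hcσ b hb
    have ha0 : 0 < a := hs0.trans ha
    have hb0 : 0 < b := hs0.trans hb
    rw [div_lt_div_iff₀ hdb hda]
    have hkey : a * γ * (b ^ 2 / τ - c) - b * γ * (a ^ 2 / τ - c)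
        = γ * ((b - a) * (a * b / τ + c)) := by
      field_simp; ring
    have hpos : 0 < γ * ((b - a) * (a * b / τ + c)) := by
      apply mul_pos hγ
      apply mul_pos (sub_pos.mpr hab)
      have : 0 < a * b / τ := div_pos (mul_pos ha0 hb0) hτ
      linarith
    linarith
  have hAnti : StrictAntiOn F (Ioi s) := by
    intro a ha b hb hab
    rw [hF a, hF b]
    have h1 := term_lt γ2 σr hγ2 hσr hσ1.le a ha b hb hab
    have h2 := term_lt (e0 * (1 - γ1) - γ2) σbar hK2 hσbar.le le_rfl a ha b hb hab
    have h3 := term_lt (e0 * γ1) σf hK3 hσf hσ2.le a ha b hb hab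
    have e3a : a * e0 * γ1 = a * (e0 * γ1) := by ring
    have e3b : b * e0 * γ1 = b * (e0 * γ1) := by ring
    rw [e3a, e3b]
    exact add_lt_add (add_lt_add h1 h2) h3
  -- continuity on Ioi s
  have hcont : ContinuousOn F (Ioi s) := by
    rw [hFe]
    apply ContinuousOn.add
    apply ContinuousOn.add
    · exact ContinuousOn.div (by fun_prop) (by fun_prop)
        (fun v hv => (hden σr hσ1.le v hv).ne')
    · exact ContinuousOn.div (by fun_prop) (by fun_prop)
        (fun v hv => (hden σbar le_rfl v hv).ne')
    · exact ContinuousOn.div (by fun_prop) (by fun_prop)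
        (fun v hv => (hden σf hσ2.le v hv).ne')
  -- tendsto at s from the right
  have hsq : s ^ 2 / τ - σbar = 0 := by rw [hs2]; field_simp; ring
  have hTop : Tendsto F (nhdsWithin s (Ioi s)) atTop := by
    have hA : Tendsto (fun v : ℝ => v * γ2 / (v ^ 2 / τ - σr)) (nhdsWithin s (Ioi s))
        (nhds (s * γ2 / (s ^ 2 / τ - σr))) := by
      apply tendsto_nhdsWithin_of_tendsto_nhds
      apply Tendsto.div ((Continuous.tendsto (by fun_prop) s)) ((Continuous.tendsto (by fun_prop) s))
      rw [hs2]
      have : σbar * τ / τ = σbar := by field_simp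
      rw [this]; linarith
    have hC : Tendsto (fun v : ℝ => v * e0 * γ1 / (v ^ 2 / τ - σf)) (nhdsWithin s (Ioi s))
        (nhds (s * e0 * γ1 / (s ^ 2 / τ - σf))) := by
      apply tendsto_nhdsWithin_of_tendsto_nhds
      apply Tendsto.div ((Continuous.tendsto (by fun_prop) s)) ((Continuous.tendsto (by fun_prop) s))
      rw [hs2]
      have : σbar * τ / τ = σbar := by field_simp
      rw [this]; linarith
    have hdenom : Tendsto (fun v : ℝ => v ^ 2 / τ - σbar) (nhdsWithin s (Ioi s))
        (nhdsWithin 0 (Ioi 0)) := by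
      rw [tendsto_nhdsWithin_iff]
      constructor
      · apply tendsto_nhdsWithin_of_tendsto_nhds
        have : Tendsto (fun v : ℝ => v ^ 2 / τ - σbar) (nhds s) (nhds (s ^ 2 / τ - σbar)) :=
          Continuous.tendsto (by fun_prop) s
        rwa [hsq] at this
      · filter_upwards [self_mem_nhdsWithin] with v hv
        exact hden σbar le_rfl v hv
    have hB : Tendsto (fun v : ℝ => v * (e0 * (1 - γ1) - γ2) / (v ^ 2 / τ - σbar))
        (nhdsWithin s (Ioi s)) atTop := by
      simp only [div_eq_mul_inv]
      apply Filter.Tendsto.pos_mul_atTop (mul_pos hs0 hK2)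
      · exact tendsto_nhdsWithin_of_tendsto_nhds (Continuous.tendsto (by fun_prop) s)
      · exact tendsto_inv_nhdsGT_zero.comp hdenom
    rw [hFe]
    exact Filter.Tendsto.atTop_add (Filter.Tendsto.add_atTop hA hB) hC
  -- tendsto at infinity to 0
  have hzero : ∀ (γ c : ℝ), Tendsto (fun v : ℝ => v * γ / (v ^ 2 / τ - c)) atTop (nhds 0) := by
    intro γ c
    have h1 : Tendsto (fun v : ℝ => v / τ - c / v) atTop atTop := by
      apply Filter.Tendsto.atTop_add (f := fun v : ℝ => v / τ)
        (g := fun v : ℝ => -(c / v)) (C := 0)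
      · exact tendsto_id.atTop_div_const hτ
      · rw [← neg_zero]
        exact (tendsto_const_nhds.div_atTop tendsto_id).neg
    have h2 : Tendsto (fun v : ℝ => γ / (v / τ - c / v)) atTop (nhds 0) :=
      tendsto_const_nhds.div_atTop h1
    apply h2.congr'
    filter_upwards [eventually_gt_atTop (0 : ℝ)] with v hv
    have hd : v ^ 2 / τ - c = v * (v / τ - c / v) := by field_simp
    rw [hd, show v * γ = v * γ from rfl, ← mul_div_mul_left γ (v / τ - c / v) hv.ne']
  have hZero : Tendsto F atTop (nhds 0) := by
    rw [hFe]
    have h3 : Tendsto (fun v : ℝ => v * e0 * γ1 / (v ^ 2 / τ - σf)) atTop (nhds 0) := by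
      apply (hzero (e0 * γ1) σf).congr
      intro v; rw [mul_assoc]
    have := ((hzero γ2 σr).add (hzero (e0 * (1 - γ1) - γ2) σbar)).add h3
    simpa using this
  refine ⟨hAnti, hTop, hZero, ?_⟩
  intro d hd
  have hne : (nhdsWithin s (Ioi s)).NeBot := nhdsGT_neBot s
  obtain ⟨a, haF, ha⟩ := ((hTop.eventually_gt_atTop d).and self_mem_nhdsWithin).exists
  obtain ⟨b, hbF, hab⟩ := ((hZero.eventually_lt_const hd).and (eventually_gt_atTop a)).exists
  have hb : b ∈ Ioi s := lt_trans ha hab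
  have hIcc : Icc a b ⊆ Ioi s := fun x hx => lt_of_lt_of_le ha hx.1
  have hivt := intermediate_value_Icc' (le_of_lt hab) (hcont.mono hIcc)
  have hdmem : d ∈ Icc (F b) (F a) := ⟨hbF.le, haF.le⟩
  obtain ⟨v, hv, hFv⟩ := hivt hdmem
  refine ⟨v, ⟨hIcc hv, hFv⟩, ?_⟩
  rintro w ⟨hw, hFw⟩
  exact hAnti.injOn hw (hIcc hv) (hFw.trans hFv.symm)
end

section
/- Let γ > 0, F_max > 0, p_f > 0 constant. The equation p_f γ (F_max − f)² − f = 0 has exactly two real roots f₁ > f₂ (with f₂ < F_max < f₁ or both below/above depending on parameters; in fact both roots are real and distinct since the discriminant (2p_fγF_max + 1)² − 4p_f²γ²F_max² = 4p_fγF_max + 1 > 0), and the ODE f'(t) = γ(p_fγ(F_max − f)² − f) with f(T) = f̄, f̄ strictly between f₁ and f₂, has the explicit solution f(t) = f₂ + (f₁ − f₂)/(1 − ((f̄ − f₁)/(f̄ − f₂))e^{μ(t−T)}) where μ = p_fγ²(f₁ − f₂). -/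
/-- The equation `p_f γ (F_max − f)² − f = 0` has exactly two real roots
`f₁ > f₂`, and the Riccati ODE `f' = γ(p_fγ(F_max − f)² − f)` with `f(T) = f̄`,
`f̄` strictly between the roots, has the explicit sigmoid solution
`f(t) = f₂ + (f₁ − f₂)/(1 − ((f̄ − f₁)/(f̄ − f₂))e^{μ(t−T)})` with
`μ = p_fγ²(f₁ − f₂)`. -/
theorem riccati_sigmoid (γ Fmax pf : ℝ) (hγ : 0 < γ) (hF : 0 < Fmax) (hpf : 0 < pf) :
    ∃ f1 f2 : ℝ, f2 < f1 ∧
      pf * γ * (Fmax - f1) ^ 2 - f1 = 0 ∧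
      pf * γ * (Fmax - f2) ^ 2 - f2 = 0 ∧
      (∀ x : ℝ, pf * γ * (Fmax - x) ^ 2 - x = 0 → x = f1 ∨ x = f2) ∧
      ∀ T fbar : ℝ, f2 < fbar → fbar < f1 →
        ∀ f : ℝ → ℝ,
          (∀ t : ℝ, f t = f2 + (f1 - f2) /
            (1 - (fbar - f1) / (fbar - f2) * Real.exp (pf * γ ^ 2 * (f1 - f2) * (t - T)))) →
          f T = fbar ∧
          ∀ t : ℝ, HasDerivAt f (γ * (pf * γ * (Fmax - f t) ^ 2 - f t)) t := by
  have ha0 : 0 < pf * γ := mul_pos hpf hγ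
  set a := pf * γ with ha
  have hs0' : (0:ℝ) < 4 * a * Fmax + 1 := by positivity
  set s := Real.sqrt (4 * a * Fmax + 1) with hs
  have hs0 : 0 < s := Real.sqrt_pos.2 hs0'
  have hs2 : s ^ 2 = 4 * a * Fmax + 1 := Real.sq_sqrt hs0'.le
  set f1 := (2 * a * Fmax + 1 + s) / (2 * a) with hf1
  set f2 := (2 * a * Fmax + 1 - s) / (2 * a) with hf2
  have h21 : f2 < f1 := by
    rw [hf1, hf2, div_lt_div_iff₀ (by positivity) (by positivity)]
    nlinarith
  have key : ∀ x : ℝ, pf * γ * (Fmax - x) ^ 2 - x = a * (x - f1) * (x - f2) := by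
    intro x
    rw [hf1, hf2, ← ha]
    field_simp
    nlinarith [hs2]
  refine ⟨f1, f2, h21, by rw [key]; ring, by rw [key]; ring, ?_, ?_⟩
  · intro x hx
    rw [key] at hx
    rcases mul_eq_zero.1 hx with h | h
    · rcases mul_eq_zero.1 h with h | h
      · exact absurd h ha0.ne'
      · exact Or.inl (by linarith)
    · exact Or.inr (by linarith)
  · intro T fbar h2b hb1 f hfeq
    have hc : 0 < f1 - f2 := by linarith
    have hd2 : (0:ℝ) < fbar - f2 := by linarith
    set r := (fbar - f1) / (fbar - f2) with hr
    have hrneg : r ≤ 0 := div_nonpos_of_nonpos_of_nonneg (by linarith) hd2.le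
    set μ := pf * γ ^ 2 * (f1 - f2) with hμ
    have hD : ∀ t : ℝ, (0:ℝ) < 1 - r * Real.exp (μ * (t - T)) := by
      intro t
      have := Real.exp_pos (μ * (t - T))
      nlinarith
    constructor
    · rw [hfeq T]
      have h1r : 1 - r * Real.exp (μ * (T - T)) = (f1 - f2) / (fbar - f2) := by
        simp only [sub_self, mul_zero, Real.exp_zero, mul_one, hr]
        field_simp
        ring
      rw [h1r, div_div_eq_mul_div, mul_comm, mul_div_assoc, div_self hc.ne', mul_one]
      ring
    · intro t
      have hlin : HasDerivAt (fun u : ℝ => μ * (u - T)) μ t := by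
        simpa using ((hasDerivAt_id t).sub_const T).const_mul μ
      have hexp : HasDerivAt (fun u : ℝ => Real.exp (μ * (u - T)))
          (Real.exp (μ * (t - T)) * μ) t := hlin.exp
      have hden : HasDerivAt (fun u : ℝ => 1 - r * Real.exp (μ * (u - T)))
          (-(r * (Real.exp (μ * (t - T)) * μ))) t := (hexp.const_mul r).const_sub 1
      have hdiv : HasDerivAt (fun u : ℝ => f2 + (f1 - f2) /
          (1 - r * Real.exp (μ * (u - T))))
          ((0 * (1 - r * Real.exp (μ * (t - T))) - (f1 - f2) *
            (-(r * (Real.exp (μ * (t - T)) * μ)))) /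
            (1 - r * Real.exp (μ * (t - T))) ^ 2) t :=
        ((hasDerivAt_const t (f1 - f2)).div hden (hD t).ne').const_add f2
      have hfe : f = fun u : ℝ => f2 + (f1 - f2) /
          (1 - r * Real.exp (μ * (u - T))) := funext hfeq
      rw [hfe]
      convert hdiv using 1
      have hDne : (1 - r * Real.exp (μ * (t - T))) ≠ 0 := (hD t).ne'
      set E := Real.exp (μ * (t - T)) with hE
      rw [key]
      have hft : f2 + (f1 - f2) / (1 - r * E) - f1 = (f1 - f2) * (r * E) / (1 - r * E) := by
        field_simp
        ring
      have hft2 : f2 + (f1 - f2) / (1 - r * E) - f2 = (f1 - f2) / (1 - r * E) := by ring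
      rw [hft, hft2, hμ, ha]
      field_simp
      ring
end

section
/- Let d, e⁰, σ̄, τ, g > 0 and let v̄(δ) = (e⁰ − dgδ)τ/(2d) + sqrt(σ̄τ + ((e⁰ − dgδ)τ/(2d))²) be the turnpike velocity on a track with constant slope δ. Then v̄(δ) is strictly decreasing in δ, and its derivative at δ = 0 equals −gτ/2 · (1 + (e⁰τ/(2d))/sqrt(σ̄τ + (e⁰τ/(2d))²)), so the first-order change in velocity for small slope δ is Δv = −gδτ(1/2 + (e⁰τ/(4d))/sqrt(σ̄τ + (e⁰τ/(2d))²)). -/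
/-- The turnpike velocity on a track with constant slope `δ`,
`v̄(δ) = (e⁰ − dgδ)τ/(2d) + √(σ̄τ + ((e⁰ − dgδ)τ/(2d))²)`, is strictly decreasing
in `δ`, and its derivative at `δ = 0` equals
`−gτ/2 · (1 + (e⁰τ/(2d))/√(σ̄τ + (e⁰τ/(2d))²))`. -/
theorem slope_velocity (d e0 σbar τ g : ℝ)
    (hd : 0 < d) (he0 : 0 < e0) (hσ : 0 < σbar) (hτ : 0 < τ) (hg : 0 < g)
    (vbar : ℝ → ℝ)
    (hv : ∀ δ : ℝ, vbar δ = (e0 - d * g * δ) * τ / (2 * d)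
      + Real.sqrt (σbar * τ + ((e0 - d * g * δ) * τ / (2 * d)) ^ 2)) :
    StrictAnti vbar ∧
    HasDerivAt vbar
      (-(g * τ) / 2 * (1 + (e0 * τ / (2 * d))
        / Real.sqrt (σbar * τ + (e0 * τ / (2 * d)) ^ 2))) 0 := by
  have hvf : vbar = fun δ => (e0 - d * g * δ) * τ / (2 * d)
      + Real.sqrt (σbar * τ + ((e0 - d * g * δ) * τ / (2 * d)) ^ 2) := funext hv
  have hc : 0 < σbar * τ := mul_pos hσ hτ
  have key : ∀ δ : ℝ, HasDerivAt vbar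
      (-(g * τ) / 2 * (1 + ((e0 - d * g * δ) * τ / (2 * d))
        / Real.sqrt (σbar * τ + ((e0 - d * g * δ) * τ / (2 * d)) ^ 2))) δ := by
    intro δ
    set u : ℝ := (e0 - d * g * δ) * τ / (2 * d) with hu_def
    have hpos : 0 < σbar * τ + u ^ 2 := by positivity
    have hsne : Real.sqrt (σbar * τ + u ^ 2) ≠ 0 :=
      ne_of_gt (Real.sqrt_pos.mpr hpos)
    have hu : HasDerivAt (fun x : ℝ => (e0 - d * g * x) * τ / (2 * d)) (-(g * τ) / 2) δ := by
      have h1 : HasDerivAt (fun x : ℝ => e0 - d * g * x) (-(d * g)) δ := by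
        simpa using ((hasDerivAt_id δ).const_mul (d * g)).const_sub e0
      have h2 := (h1.mul_const τ).div_const (2 * d)
      refine h2.congr_deriv ?_
      rw [div_eq_iff (by positivity)]
      ring
    have hinner : HasDerivAt
        (fun x : ℝ => σbar * τ + ((e0 - d * g * x) * τ / (2 * d)) ^ 2)
        (2 * u ^ 1 * (-(g * τ) / 2)) δ := (hu.pow 2).const_add (σbar * τ)
    have hsq := hinner.sqrt (ne_of_gt hpos)
    have htot := hu.add hsq
    rw [hvf]
    have heq : -(g * τ) / 2 + 2 * u ^ 1 * (-(g * τ) / 2) / (2 * Real.sqrt (σbar * τ + u ^ 2))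
        = -(g * τ) / 2 * (1 + u / Real.sqrt (σbar * τ + u ^ 2)) := by
      field_simp
      ring
    exact heq ▸ htot
  constructor
  · apply strictAnti_of_deriv_neg
    intro δ
    rw [(key δ).deriv]
    set u : ℝ := (e0 - d * g * δ) * τ / (2 * d) with hu_def
    have hpos : 0 < σbar * τ + u ^ 2 := by positivity
    have hsq : 0 < Real.sqrt (σbar * τ + u ^ 2) := Real.sqrt_pos.mpr hpos
    have habs : -u < Real.sqrt (σbar * τ + u ^ 2) := by
      have h1 : |u| < Real.sqrt (σbar * τ + u ^ 2) := by
        rw [← Real.sqrt_sq_eq_abs]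
        exact Real.sqrt_lt_sqrt (sq_nonneg u) (by linarith)
      calc -u ≤ |u| := neg_le_abs u
        _ < _ := h1
    have h2 : (0:ℝ) < 1 + u / Real.sqrt (σbar * τ + u ^ 2) := by
      have h4 : -(u / Real.sqrt (σbar * τ + u ^ 2)) < 1 := by
        have := (div_lt_div_iff_of_pos_right hsq).2 habs
        simpa [neg_div, div_self (ne_of_gt hsq)] using this
      linarith
    have hgτ : 0 < g * τ := mul_pos hg hτ
    have hneg : -(g * τ) / 2 < 0 := by linarith
    exact mul_neg_of_neg_of_pos hneg h2
  · have := key 0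
    simpa using this
end

section
/- Let 0 < f̄ < F_max, γ, λ > 0, and set μ = γλF_max, c = F_max/f̄ − 1 > 0. Then ∫₀^T (F_max/(1 + ce^{−μt}))² e^{−At} dt is continuous and strictly increasing in λ for each fixed T > 0, A > 0, with limit (as λ → ∞) equal to F_max²(1 − e^{−AT})/A and limit (as λ → 0⁺) equal to f̄²(1 − e^{−AT})/A. Hence for any target value α strictly between f̄²(1−e^{−AT})/A and F_max²(1−e^{−AT})/A there exists a unique λ > 0 achieving ∫₀^T f(t)²e^{−At}dt = α. -/
open Filter Set intervalIntegral MeasureTheory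

lemma int_exp_neg (A T : ℝ) (hA : A ≠ 0) :
    ∫ t in (0:ℝ)..T, Real.exp (-A * t) = (1 - Real.exp (-A * T)) / A := by
  have H : ∀ t : ℝ, HasDerivAt (fun t => -(Real.exp (-A * t) / A)) (Real.exp (-A * t)) t := by
    intro t
    have h1 : HasDerivAt (fun t : ℝ => -A * t) (-A) t := by
      simpa using (hasDerivAt_id t).const_mul (-A)
    have h3 := (h1.exp.div_const A).neg
    have e : Real.exp (-A * t) = -(Real.exp (-A * t) * -A / A) := by
      rw [mul_neg, neg_div, neg_neg, mul_div_assoc, div_self hA, mul_one]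
    rw [e]; exact h3
  rw [intervalIntegral.integral_eq_sub_of_hasDerivAt (fun t _ => H t)
    ((Real.continuous_exp.comp (continuous_const.mul continuous_id)).intervalIntegrable 0 T)]
  simp
  ring

set_option maxHeartbeats 1000000 in
open Filter Set in
/-- The weighted energy integral `I(λ) = ∫₀^T (F_max/(1 + c e^{−γλF_max t}))² e^{−At} dt`
(with `c = F_max/f̄ − 1`) is continuous and strictly increasing in `λ > 0`, tends to
`F_max²(1 − e^{−AT})/A` as `λ → ∞` and to `f̄²(1 − e^{−AT})/A` as `λ → 0⁺`; hence
any target `α` strictly between these values is achieved by a unique `λ > 0`. -/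
theorem energy_multiplier_wellposed (γ Fmax fbar T A : ℝ)
    (hγ : 0 < γ) (hfbar : 0 < fbar) (hfF : fbar < Fmax) (hT : 0 < T) (hA : 0 < A)
    (I : ℝ → ℝ)
    (hI : ∀ lam : ℝ, I lam = ∫ t in (0:ℝ)..T,
      (Fmax / (1 + (Fmax / fbar - 1) * Real.exp (-(γ * lam * Fmax) * t))) ^ 2
        * Real.exp (-A * t)) :
    ContinuousOn I (Ioi 0) ∧
    StrictMonoOn I (Ioi 0) ∧
    Tendsto I atTop (nhds (Fmax ^ 2 * (1 - Real.exp (-A * T)) / A)) ∧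
    Tendsto I (nhdsWithin 0 (Ioi 0)) (nhds (fbar ^ 2 * (1 - Real.exp (-A * T)) / A)) ∧
    ∀ α : ℝ, fbar ^ 2 * (1 - Real.exp (-A * T)) / A < α →
      α < Fmax ^ 2 * (1 - Real.exp (-A * T)) / A →
      ∃! lam : ℝ, 0 < lam ∧ I lam = α := by
  have hF : 0 < Fmax := hfbar.trans hfF
  set c := Fmax / fbar - 1 with hc_def
  have hc : 0 < c := by
    have : 1 < Fmax / fbar := (one_lt_div hfbar).mpr hfF
    simpa [hc_def] using sub_pos.mpr this
  set g : ℝ → ℝ → ℝ := fun lam t =>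
    (Fmax / (1 + c * Real.exp (-(γ * lam * Fmax) * t))) ^ 2 * Real.exp (-A * t) with hg_def
  have hIg : ∀ lam, I lam = ∫ t in (0:ℝ)..T, g lam t := hI
  have hden : ∀ lam t : ℝ, 0 < 1 + c * Real.exp (-(γ * lam * Fmax) * t) := by
    intro lam t; positivity
  -- continuity of the uncurried integrand
  have hgc : Continuous (Function.uncurry g) := by
    apply Continuous.mul
    · apply Continuous.pow
      apply Continuous.div continuous_const
      · fun_prop
      · intro p; exact (hden p.1 p.2).ne'
    · fun_prop
  have hgt : ∀ lam, Continuous (g lam) := by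
    intro lam
    have h := hgc.comp (continuous_const.prodMk continuous_id : Continuous fun t : ℝ => (lam, t))
    exact h
  have hint : ∀ lam, IntervalIntegrable (g lam) volume 0 T := fun lam =>
    (hgt lam).intervalIntegrable 0 T
  have hIcont : Continuous I := by
    have h := continuous_parametric_intervalIntegral_of_continuous' (μ := volume) hgc 0 T
    have : I = fun lam => ∫ t in (0:ℝ)..T, g lam t := funext hIg
    rw [this]; exact h
  -- strict monotonicity
  have hmono : StrictMonoOn I (Ioi 0) := by
    intro a ha b hb hab
    rw [mem_Ioi] at ha hb
    have key : 0 < ∫ t in (0:ℝ)..T, (g b t - g a t) := by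
      apply intervalIntegral.intervalIntegral_pos_of_pos_on ((hint b).sub (hint a)) _ hT
      intro t ht
      have ht0 : 0 < t := ht.1
      have hexp : Real.exp (-(γ * b * Fmax) * t) < Real.exp (-(γ * a * Fmax) * t) := by
        apply Real.exp_lt_exp.mpr
        nlinarith [mul_lt_mul_of_pos_left hab (mul_pos (mul_pos hγ hF) ht0)]
      have hdb := hden b t
      have hda := hden a t
      have h1 : 1 + c * Real.exp (-(γ * b * Fmax) * t)
          < 1 + c * Real.exp (-(γ * a * Fmax) * t) := by nlinarith
      have h2 : Fmax / (1 + c * Real.exp (-(γ * a * Fmax) * t))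
          < Fmax / (1 + c * Real.exp (-(γ * b * Fmax) * t)) :=
        div_lt_div_of_pos_left hF hdb h1
      have h3 : 0 < Fmax / (1 + c * Real.exp (-(γ * a * Fmax) * t)) := div_pos hF hda
      have hep := Real.exp_pos (-A * t)
      have h4 : (Fmax / (1 + c * Real.exp (-(γ * a * Fmax) * t))) ^ 2
          < (Fmax / (1 + c * Real.exp (-(γ * b * Fmax) * t))) ^ 2 := by nlinarith
      simp only [hg_def]
      nlinarith [mul_pos (sub_pos.mpr h4) hep]
    have := (intervalIntegral.integral_sub (hint b) (hint a)) ▸ key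
    rw [hIg a, hIg b]
    linarith
  -- bound
  have hnorm : ∀ lam t : ℝ, ‖g lam t‖ ≤ Fmax ^ 2 * Real.exp (-A * t) := by
    intro lam t
    have hd := hden lam t
    have h1 : 1 ≤ 1 + c * Real.exp (-(γ * lam * Fmax) * t) :=
      le_add_of_nonneg_right (by positivity)
    have hfr : Fmax / (1 + c * Real.exp (-(γ * lam * Fmax) * t)) ≤ Fmax :=
      div_le_self hF.le h1
    have hfr0 : 0 < Fmax / (1 + c * Real.exp (-(γ * lam * Fmax) * t)) := div_pos hF hd
    have hep := Real.exp_pos (-A * t)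
    have h4 : (Fmax / (1 + c * Real.exp (-(γ * lam * Fmax) * t))) ^ 2 ≤ Fmax ^ 2 := by nlinarith
    rw [Real.norm_eq_abs, abs_of_nonneg (by positivity)]
    simp only [hg_def]
    nlinarith [mul_le_mul_of_nonneg_right h4 hep.le]
  have hbound_int : IntervalIntegrable (fun t => Fmax ^ 2 * Real.exp (-A * t)) volume 0 T := by
    apply Continuous.intervalIntegrable; fun_prop
  -- limit at infinity
  have hval_top : (∫ t in (0:ℝ)..T, Fmax ^ 2 * Real.exp (-A * t))
      = Fmax ^ 2 * (1 - Real.exp (-A * T)) / A := by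
    rw [intervalIntegral.integral_const_mul, int_exp_neg A T hA.ne']; ring
  have hlim_top : Tendsto I atTop (nhds (Fmax ^ 2 * (1 - Real.exp (-A * T)) / A)) := by
    have heq : I = fun lam => ∫ t in (0:ℝ)..T, g lam t := funext hIg
    rw [heq, ← hval_top]
    apply intervalIntegral.tendsto_integral_filter_of_dominated_convergence
      (fun t => Fmax ^ 2 * Real.exp (-A * t))
    · exact Eventually.of_forall fun lam => (hgt lam).aestronglyMeasurable
    · exact Eventually.of_forall fun lam => ae_of_all _ fun t _ => hnorm lam t
    · exact hbound_int
    · apply ae_of_all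
      intro t ht
      rw [uIoc_of_le hT.le] at ht
      have ht0 : 0 < t := ht.1
      have h1 : Tendsto (fun lam : ℝ => -(γ * lam * Fmax) * t) atTop atBot := by
        have : Tendsto (fun lam : ℝ => lam * (-(γ * Fmax * t))) atTop atBot := by
          apply Tendsto.atTop_mul_const_of_neg
            (by nlinarith [mul_pos (mul_pos hγ hF) ht0]) tendsto_id
        convert this using 2 with lam
        ring
      have h2 : Tendsto (fun lam => Real.exp (-(γ * lam * Fmax) * t)) atTop (nhds 0) :=
        Real.tendsto_exp_atBot.comp h1
      have hφ : ContinuousAt (fun x : ℝ => (Fmax / (1 + c * x)) ^ 2 * Real.exp (-A * t)) 0 := by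
        apply ContinuousAt.mul _ continuousAt_const
        apply ContinuousAt.pow
        apply ContinuousAt.div continuousAt_const (by fun_prop)
        norm_num
      have h3 := (hφ.tendsto.comp h2)
      simp only [Function.comp_def] at h3
      convert h3 using 2
      norm_num
  -- limit at zero
  have hval_zero : (∫ t in (0:ℝ)..T, fbar ^ 2 * Real.exp (-A * t))
      = fbar ^ 2 * (1 - Real.exp (-A * T)) / A := by
    rw [intervalIntegral.integral_const_mul, int_exp_neg A T hA.ne']; ring
  have hlim_zero : Tendsto I (nhdsWithin 0 (Ioi 0))
      (nhds (fbar ^ 2 * (1 - Real.exp (-A * T)) / A)) := by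
    have heq : I = fun lam => ∫ t in (0:ℝ)..T, g lam t := funext hIg
    rw [heq, ← hval_zero]
    apply intervalIntegral.tendsto_integral_filter_of_dominated_convergence
      (fun t => Fmax ^ 2 * Real.exp (-A * t))
    · exact Eventually.of_forall fun lam => (hgt lam).aestronglyMeasurable
    · exact Eventually.of_forall fun lam => ae_of_all _ fun t _ => hnorm lam t
    · exact hbound_int
    · apply ae_of_all
      intro t _
      have h2 : Tendsto (fun lam => Real.exp (-(γ * lam * Fmax) * t))
          (nhdsWithin 0 (Ioi 0)) (nhds 1) := by
        have hc2 : ContinuousAt (fun lam : ℝ => Real.exp (-(γ * lam * Fmax) * t)) 0 := by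
          fun_prop
        have h := hc2.tendsto.mono_left (nhdsWithin_le_nhds (s := Ioi 0))
        simpa using h
      have hne : (1 : ℝ) + c * 1 ≠ 0 := by nlinarith
      have hφ : ContinuousAt (fun x : ℝ => (Fmax / (1 + c * x)) ^ 2 * Real.exp (-A * t)) 1 := by
        apply ContinuousAt.mul _ continuousAt_const
        apply ContinuousAt.pow
        exact ContinuousAt.div continuousAt_const (by fun_prop) hne
      have h3 := hφ.tendsto.comp h2
      simp only [Function.comp_def] at h3
      convert h3 using 2
      have : (1 : ℝ) + c * 1 = Fmax / fbar := by simp [hc_def]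
      rw [this, div_div_eq_mul_div, mul_div_assoc]
      field_simp
  refine ⟨hIcont.continuousOn, hmono, hlim_top, hlim_zero, ?_⟩
  intro α hα1 hα2
  have h1 : ∀ᶠ lam in nhdsWithin 0 (Ioi 0), I lam < α := hlim_zero.eventually_lt_const hα1
  obtain ⟨a, haI, ha0⟩ := (h1.and eventually_mem_nhdsWithin).exists
  rw [mem_Ioi] at ha0
  have h2 : ∀ᶠ lam in atTop, α < I lam := hlim_top.eventually_const_lt hα2
  obtain ⟨b, hbI, hab⟩ := (h2.and (eventually_gt_atTop a)).exists
  obtain ⟨lam, hmem, hval⟩ := intermediate_value_Icc hab.le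
    (hIcont.continuousOn (s := Icc a b)) ⟨haI.le, hbI.le⟩
  have hlam0 : 0 < lam := ha0.trans_le hmem.1
  refine ⟨lam, ⟨hlam0, hval⟩, ?_⟩
  rintro y ⟨hy0, hyI⟩
  exact hmono.injOn (mem_Ioi.mpr hy0) (mem_Ioi.mpr hlam0) (hyI.trans hval.symm)
end
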